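/- For the inductive system with connecting matrix T = [[1,1],[1,0]] (Fibonacci-type embeddings), the inductive limit of the positive cones ℕ⊕ℕ under T⁻ᵐ, viewed inside ℤ⊕ℤ, equals { (a,b) ∈ ℤ⊕ℤ : ((1+√5)/2)·a + b ≥ 0 }; that is, an integer pair (a,b) lies in some T⁻ᵐ(ℕ⊕ℕ) if and only if ((1+√5)/2)a + b ≥ 0 (with (a,b) ≠ 0 implying strict positivity wherever applicable). -/

import Mathlib

open Real goldenRatio

private lemma penrose_key (a b : ℤ) (c : ℝ) (hc : c ^ 2 = c + 1) (m : ℕ) :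
    c * (((fun q : ℤ × ℤ => (q.1 + q.2, q.1))^[m] (a, b)).1 : ℝ) +
      (((fun q : ℤ × ℤ => (q.1 + q.2, q.1))^[m] (a, b)).2 : ℝ) = c ^ m * (c * a + b) := by
  induction m with
  | zero => simp
  | succ n ih =>
    rw [Function.iterate_succ_apply']
    set p := (fun q : ℤ × ℤ => (q.1 + q.2, q.1))^[n] (a, b)
    have : c * ((p.1 + p.2 : ℤ) : ℝ) + (p.1 : ℝ) = c * (c * p.1 + p.2) := by
      push_cast; linear_combination (-(p.1 : ℝ)) * hc
    simp only [p] at this ⊢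
    rw [this, ih, pow_succ]
    ring

/-- For the Fibonacci-type connecting map `T(a,b) = (a+b, a)` on `ℤ ⊕ ℤ`, an integer pair
`(a,b)` lies in `T⁻ᵐ(ℕ ⊕ ℕ)` for some `m` (equivalently `Tᵐ(a,b)` has nonnegative
entries) if and only if `((1+√5)/2)·a + b ≥ 0`; moreover for `(a,b) ≠ 0` the inequality
is automatically strict.  This computes `K₀₊` of the AF-algebra of the Penrose tiling. -/
theorem penrose_positive_cone (a b : ℤ) :
    ((∃ m : ℕ, 0 ≤ ((fun q : ℤ × ℤ => (q.1 + q.2, q.1))^[m] (a, b)).1 ∧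
        0 ≤ ((fun q : ℤ × ℤ => (q.1 + q.2, q.1))^[m] (a, b)).2) ↔
      0 ≤ (1 + Real.sqrt 5) / 2 * (a : ℝ) + (b : ℝ)) ∧
    (¬(a = 0 ∧ b = 0) → 0 ≤ (1 + Real.sqrt 5) / 2 * (a : ℝ) + (b : ℝ) →
      0 < (1 + Real.sqrt 5) / 2 * (a : ℝ) + (b : ℝ)) := by
  have hL : (1 + Real.sqrt 5) / 2 * (a : ℝ) + (b : ℝ) = φ * a + b := rfl
  have keyφ := penrose_key a b φ goldenRatio_sq
  have keyψ := penrose_key a b ψ goldenConj_sq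
  -- strictness
  have strict : ¬(a = 0 ∧ b = 0) → 0 ≤ φ * (a : ℝ) + b → 0 < φ * (a : ℝ) + b := by
    intro hab hle
    rcases hle.lt_or_eq with h | h
    · exact h
    exfalso
    rcases eq_or_ne a 0 with ha | ha
    · have hb : (b : ℝ) = 0 := by push_cast [ha] at h; linarith
      exact hab ⟨ha, by exact_mod_cast hb⟩
    · have ha' : (a : ℝ) ≠ 0 := Int.cast_ne_zero.mpr ha
      apply goldenRatio_irrational
      refine ⟨(-b : ℚ) / (a : ℚ), ?_⟩
      push_cast
      rw [div_eq_iff ha']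
      linarith
  -- general existence from strict positivity
  have gen : 0 < φ * (a : ℝ) + b →
      ∃ m : ℕ, 0 ≤ ((fun q : ℤ × ℤ => (q.1 + q.2, q.1))^[m] (a, b)).1 ∧
        0 ≤ ((fun q : ℤ × ℤ => (q.1 + q.2, q.1))^[m] (a, b)).2 := by
    intro hLpos
    set L : ℝ := φ * a + b with hLdef
    set L' : ℝ := ψ * a + b with hL'def
    have habs : ∀ m : ℕ, |ψ ^ m * L'| ≤ |L'| := by
      intro m
      rw [abs_mul]
      have h1 : |ψ| ≤ 1 := by
        rw [abs_le]
        constructor <;> [linarith [neg_one_lt_goldenConj]; linarith [goldenConj_neg]]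
      calc |ψ ^ m| * |L'| ≤ 1 * |L'| := by
            apply mul_le_mul_of_nonneg_right _ (abs_nonneg _)
            rw [abs_pow]; exact pow_le_one₀ (abs_nonneg _) h1
        _ = |L'| := one_mul _
    obtain ⟨N, hN⟩ := pow_unbounded_of_one_lt (|L'| / L) one_lt_goldenRatio
    have hfirst : ∀ m : ℕ, N ≤ m →
        0 ≤ ((fun q : ℤ × ℤ => (q.1 + q.2, q.1))^[m] (a, b)).1 := by
      intro m hm
      have h1 : |L'| < φ ^ m * L := by
        have hφm : φ ^ N ≤ φ ^ m := pow_le_pow_right₀ (le_of_lt one_lt_goldenRatio) hm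
        rw [div_lt_iff₀ hLpos] at hN
        nlinarith
      have hsub : (φ - ψ) * (((fun q : ℤ × ℤ => (q.1 + q.2, q.1))^[m] (a, b)).1 : ℝ)
          = φ ^ m * L - ψ ^ m * L' := by
        linear_combination keyφ m - keyψ m
      have hs5 : (0:ℝ) < φ - ψ := by
        rw [goldenRatio_sub_goldenConj]; positivity
      have hψ : ψ ^ m * L' ≤ |L'| := le_trans (le_abs_self _) (habs m)
      have : (0:ℝ) ≤ (((fun q : ℤ × ℤ => (q.1 + q.2, q.1))^[m] (a, b)).1 : ℝ) := by
        nlinarith [hsub]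
      exact_mod_cast this
    refine ⟨N + 1, hfirst (N + 1) (Nat.le_succ N), ?_⟩
    have h2 : ((fun q : ℤ × ℤ => (q.1 + q.2, q.1))^[N + 1] (a, b)).2
        = ((fun q : ℤ × ℤ => (q.1 + q.2, q.1))^[N] (a, b)).1 := by
      rw [Function.iterate_succ_apply']
    rw [h2]
    exact hfirst N le_rfl
  refine ⟨⟨?_, ?_⟩, by rw [hL]; exact strict⟩
  · rintro ⟨m, h1, h2⟩
    rw [hL]
    by_contra hneg
    push_neg at hneg
    have hpos : (0 : ℝ) < φ ^ m := pow_pos goldenRatio_pos m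
    have hk := keyφ m
    have hml : φ ^ m * (φ * (a : ℝ) + b) < 0 := mul_neg_of_pos_of_neg hpos hneg
    have c1 : (0:ℝ) ≤ (((fun q : ℤ × ℤ => (q.1 + q.2, q.1))^[m] (a, b)).1 : ℝ) :=
      Int.cast_nonneg_iff.mpr h1
    have c2 : (0:ℝ) ≤ (((fun q : ℤ × ℤ => (q.1 + q.2, q.1))^[m] (a, b)).2 : ℝ) :=
      Int.cast_nonneg_iff.mpr h2
    nlinarith [goldenRatio_pos]
  · intro hge
    rw [hL] at hge
    by_cases hab : a = 0 ∧ b = 0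
    · exact ⟨0, by simp [hab.1, hab.2]⟩
    · exact gen (strict hab hge)
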